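/- Let g : {0,1}^n → {0,1} be a nonzero s-sparse polynomial over F₂ of degree at most d, and let a ∈ {0,1}^n with g(a) = 1 and wt(a) ≥ 24d, where wt denotes Hamming weight. For y uniform on {0,1}^n let a*y denote the coordinatewise AND. Then Pr_y[g(a*y) = 1 and wt(a*y) ≤ (3/4)·wt(a)] ≥ 2^{−(d+1)}. -/

import Mathlib

open MvPolynomial Finset

private lemma zmod2_cases : ∀ v : ZMod 2, v = 0 ∨ v = 1 := by decide


/-- Schwartz–Zippel over F₂ (function/count form). -/
private lemma sz_count : ∀ (n : ℕ) (d : ℕ) (q : MvPolynomial (Fin n) (ZMod 2)),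
    q.totalDegree ≤ d → (∃ y, eval y q = 1) →
    2 ^ (n - d) ≤ (Finset.univ.filter (fun y : Fin n → ZMod 2 => eval y q = 1)).card := by
  intro n
  induction n with
  | zero =>
    intro d q _ ⟨y, hy⟩
    have : y ∈ Finset.univ.filter (fun y : Fin 0 → ZMod 2 => eval y q = 1) :=
      Finset.mem_filter.mpr ⟨Finset.mem_univ y, hy⟩
    have h1 : 1 ≤ (Finset.univ.filter (fun y : Fin 0 → ZMod 2 => eval y q = 1)).card :=
      Finset.card_pos.mpr ⟨y, this⟩
    simpa [Nat.zero_sub] using h1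
  | succ n ih =>
    intro d q hdeg ⟨z, hz⟩
    set P := finSuccEquiv (ZMod 2) n q with hP
    set q₀ : MvPolynomial (Fin n) (ZMod 2) := P.coeff 0 with hq₀
    set q₁ : MvPolynomial (Fin n) (ZMod 2) :=
      ∑ k ∈ (Finset.range (P.natDegree + 1)).erase 0, P.coeff k with hq₁
    -- evaluation identities
    have E0 : ∀ y : Fin n → ZMod 2, eval (Fin.cons 0 y) q = eval y q₀ := by
      intro y
      rw [eval_eq_eval_mv_eval']
      rw [← Polynomial.coeff_zero_eq_eval_zero, Polynomial.coeff_map]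
    have E1 : ∀ y : Fin n → ZMod 2, eval (Fin.cons 1 y) q = eval y q₀ + eval y q₁ := by
      intro y
      rw [eval_eq_eval_mv_eval', Polynomial.eval_one_map]
      have hsum : Polynomial.eval (1 : MvPolynomial (Fin n) (ZMod 2)) P = q₀ + q₁ := by
        rw [Polynomial.eval_eq_sum_range]
        simp only [one_pow, mul_one]
        rw [← Finset.add_sum_erase _ _ (Finset.mem_range.mpr (Nat.succ_pos _))]
      rw [hsum, map_add]
    -- degree facts
    have Dcoeff : ∀ k : ℕ, P.coeff k ≠ 0 → (P.coeff k).totalDegree + k ≤ d := by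
      intro k hk
      exact le_trans (totalDegree_coeff_finSuccEquiv_add_le q k hk) hdeg
    have D0 : q₀.totalDegree ≤ d := by
      by_cases h : q₀ = 0
      · simp [h]
      · simpa using Dcoeff 0 h
    have D1 : q₁.totalDegree ≤ d - 1 := by
      refine le_trans (totalDegree_finset_sum _ _) (Finset.sup_le ?_)
      intro k hk
      rcases Finset.mem_erase.mp hk with ⟨hk0, _⟩
      by_cases h : P.coeff k = 0
      · simp [h]
      · have := Dcoeff k h
        omega
    have D1' : d = 0 → q₁ = 0 := by
      intro hd
      rw [hq₁]
      refine Finset.sum_eq_zero ?_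
      intro k hk
      rcases Finset.mem_erase.mp hk with ⟨hk0, _⟩
      by_contra h
      have := Dcoeff k h
      omega
    by_cases hA : ∃ y, eval y q₁ = 1
    · -- case A : q₁ nonzero as a function
      have hd1 : 1 ≤ d := by
        rcases Nat.eq_zero_or_pos d with h | h
        · exfalso; rcases hA with ⟨y, hy⟩; rw [D1' h] at hy; simp at hy
        · exact h
      have hIH := ih (d - 1) q₁ D1 hA
      set A := Finset.univ.filter (fun y : Fin n → ZMod 2 => eval y q₁ = 1) with hA'
      set T := Finset.univ.filter (fun y : Fin (n+1) → ZMod 2 => eval y q = 1) with hT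
      have hmap : ∀ y ∈ A, (Fin.cons (1 + eval y q₀) y : Fin (n+1) → ZMod 2) ∈ T := by
        intro y hy
        rw [hA', Finset.mem_filter] at hy
        rcases hy with ⟨_, hy⟩
        rw [hT, Finset.mem_filter]
        refine ⟨Finset.mem_univ _, ?_⟩
        rcases zmod2_cases (eval y q₀) with h | h
        · have : (1 : ZMod 2) + eval y q₀ = 1 := by rw [h]; ring
          rw [this, E1, hy, h]; ring
        · have : (1 : ZMod 2) + eval y q₀ = 0 := by rw [h]; decide
          rw [this, E0, h]
      have hinj : Set.InjOn (fun y : Fin n → ZMod 2 =>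
          (Fin.cons (1 + eval y q₀) y : Fin (n+1) → ZMod 2)) ↑A := by
        intro y1 _ y2 _ h
        have := congrArg Fin.tail h
        simpa [Fin.tail_cons] using this
      have hcard := Finset.card_le_card_of_injOn _ hmap hinj
      calc 2 ^ (n + 1 - d) ≤ 2 ^ (n - (d - 1)) := Nat.pow_le_pow_right (by norm_num) (by omega)
        _ ≤ A.card := hIH
        _ ≤ T.card := hcard
    · -- case B : q₁ ≡ 0 as a function
      have hB : ∀ y : Fin n → ZMod 2, eval y q₁ = 0 := by
        intro y
        rcases zmod2_cases (eval y q₁) with h | h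
        · exact h
        · exact absurd ⟨y, h⟩ hA
      have Econs : ∀ (b : ZMod 2) (y : Fin n → ZMod 2), eval (Fin.cons b y) q = eval y q₀ := by
        intro b y
        rcases zmod2_cases b with h | h
        · rw [h, E0]
        · rw [h, E1, hB, add_zero]
      have hw : ∃ y, eval y q₀ = 1 := by
        refine ⟨Fin.tail z, ?_⟩
        have := Econs (z 0) (Fin.tail z)
        rw [Fin.cons_self_tail] at this
        rw [← this, hz]
      have hIH := ih d q₀ D0 hw
      set A := Finset.univ.filter (fun y : Fin n → ZMod 2 => eval y q₀ = 1) with hA'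
      set T := Finset.univ.filter (fun y : Fin (n+1) → ZMod 2 => eval y q = 1) with hT
      have hmap : ∀ x ∈ (Finset.univ : Finset (ZMod 2)) ×ˢ A,
          (Fin.cons x.1 x.2 : Fin (n+1) → ZMod 2) ∈ T := by
        rintro ⟨b, y⟩ hx
        rw [Finset.mem_product, hA', Finset.mem_filter] at hx
        rw [hT, Finset.mem_filter]
        exact ⟨Finset.mem_univ _, by rw [Econs]; exact hx.2.2⟩
      have hinj : Set.InjOn (fun x : ZMod 2 × (Fin n → ZMod 2) =>
          (Fin.cons x.1 x.2 : Fin (n+1) → ZMod 2)) ↑((Finset.univ : Finset (ZMod 2)) ×ˢ A) := by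
        rintro ⟨b1, y1⟩ _ ⟨b2, y2⟩ _ h
        have h0 := congrArg (fun f : Fin (n+1) → ZMod 2 => f 0) h
        have ht := congrArg Fin.tail h
        simp only [Fin.cons_zero] at h0
        simp only [Fin.tail_cons] at ht
        simp [h0, ht]
      have hcard := Finset.card_le_card_of_injOn _ hmap hinj
      rw [Finset.card_product, Finset.card_univ] at hcard
      have hcz : Fintype.card (ZMod 2) = 2 := by decide
      rw [hcz] at hcard
      calc 2 ^ (n + 1 - d) ≤ 2 ^ (n - d + 1) := Nat.pow_le_pow_right (by norm_num) (by omega)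
        _ = 2 * 2 ^ (n - d) := by ring
        _ ≤ 2 * A.card := by omega
        _ ≤ T.card := hcard


private lemma keynum (w d : ℕ) (hd : 1 ≤ d) (h : 24 * d ≤ w) :
    2 ^ (4*w + 4*d + 4) ≤ 3 ^ (3*w + 1) := by
  have h6 : (2 ^ (4*w + 4*d + 4)) ^ 6 ≤ (3 ^ (3*w + 1)) ^ 6 := by
    rw [← pow_mul, ← pow_mul]
    calc 2 ^ ((4*w + 4*d + 4) * 6) ≤ 2 ^ (28 * w) :=
          Nat.pow_le_pow_right (by norm_num) (by omega)
      _ = (2 ^ 28) ^ w := by rw [← pow_mul]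
      _ ≤ (3 ^ 18) ^ w := Nat.pow_le_pow_left (by norm_num) w
      _ = 3 ^ (18 * w) := by rw [← pow_mul]
      _ ≤ 3 ^ ((3*w + 1) * 6) := Nat.pow_le_pow_right (by norm_num) (by omega)
  exact (Nat.pow_le_pow_iff_left (by norm_num)).mp h6

section Main
open Classical
variable (n : ℕ) (a : Fin n → ZMod 2)

/-- Chernoff-type counting bound. -/
private lemma chernoff (d : ℕ) (hd : 1 ≤ d)
    (hwt : 24 * d ≤ (Finset.univ.filter (fun i : Fin n => a i ≠ 0)).card) :
    (Finset.univ.filter (fun y : Fin n → ZMod 2 =>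
        3 * (Finset.univ.filter (fun i : Fin n => a i ≠ 0)).card <
        4 * (Finset.univ.filter (fun i : Fin n => a i * y i ≠ 0)).card)).card
      ≤ 2 ^ (n - d - 1) := by
  classical
  set w := (Finset.univ.filter (fun i : Fin n => a i ≠ 0)).card with hw
  set wt : (Fin n → ZMod 2) → ℕ :=
    fun y => (Finset.univ.filter (fun i : Fin n => a i * y i ≠ 0)).card with hwtdef
  set B := Finset.univ.filter (fun y : Fin n → ZMod 2 => 3 * w < 4 * wt y) with hB
  have hwn : w ≤ n := by
    rw [hw]
    calc (Finset.univ.filter (fun i : Fin n => a i ≠ 0)).card ≤ Finset.univ.card :=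
        Finset.card_filter_le _ _
      _ = n := by simp
  set m := 3 * w / 4 + 1 with hm
  -- upper bound on the exponential sum
  have expand : ∀ y : Fin n → ZMod 2,
      (3:ℕ) ^ (wt y) = ∏ i : Fin n, (if a i * y i ≠ 0 then 3 else 1) := by
    intro y
    rw [Finset.prod_ite, Finset.prod_const, Finset.prod_const, one_pow, mul_one]
  have inner : ∀ i : Fin n,
      (∑ v : ZMod 2, (if a i * v ≠ 0 then (3:ℕ) else 1)) = if a i ≠ 0 then 4 else 2 := by
    intro i
    have huniv : (Finset.univ : Finset (ZMod 2)) = {0, 1} := by decide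
    rw [huniv, Finset.sum_insert (by decide), Finset.sum_singleton]
    rcases zmod2_cases (a i) with h | h
    · simp [h]
    · simp [h]
  have hsum_eq : (∑ y : Fin n → ZMod 2, (3:ℕ) ^ (wt y)) = 4 ^ w * 2 ^ (n - w) := by
    calc (∑ y : Fin n → ZMod 2, (3:ℕ) ^ (wt y))
        = ∑ y : Fin n → ZMod 2, ∏ i : Fin n, (if a i * y i ≠ 0 then 3 else 1) := by
          exact Finset.sum_congr rfl fun y _ => expand y
      _ = ∏ i : Fin n, ∑ v : ZMod 2, (if a i * v ≠ 0 then (3:ℕ) else 1) := by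
          rw [Finset.prod_univ_sum, Fintype.piFinset_univ]
      _ = ∏ i : Fin n, (if a i ≠ 0 then (4:ℕ) else 2) := by
          exact Finset.prod_congr rfl fun i _ => inner i
      _ = 4 ^ w * 2 ^ (n - w) := by
          rw [Finset.prod_ite, Finset.prod_const, Finset.prod_const]
          congr 1
          congr 1
          have := Finset.card_filter_add_card_filter_not
            (s := (Finset.univ : Finset (Fin n))) (p := fun i => a i ≠ 0)
          simp only [Finset.card_univ, Fintype.card_fin] at this
          omega
  have hlow : B.card * 3 ^ m ≤ ∑ y : Fin n → ZMod 2, (3:ℕ) ^ (wt y) := by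
    have h1 : B.card • (3:ℕ) ^ m ≤ ∑ y ∈ B, (3:ℕ) ^ (wt y) := by
      refine Finset.card_nsmul_le_sum _ _ _ ?_
      intro y hy
      rw [hB, Finset.mem_filter] at hy
      have : m ≤ wt y := by omega
      exact Nat.pow_le_pow_right (by norm_num) this
    have h2 : (∑ y ∈ B, (3:ℕ) ^ (wt y)) ≤ ∑ y : Fin n → ZMod 2, (3:ℕ) ^ (wt y) :=
      Finset.sum_le_sum_of_subset (Finset.subset_univ _)
    calc B.card * 3 ^ m = B.card • (3:ℕ) ^ m := by simp
      _ ≤ _ := le_trans h1 h2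
  have hUB : B.card * 3 ^ m ≤ 2 ^ (n + w) := by
    have : (4:ℕ) ^ w * 2 ^ (n - w) = 2 ^ (n + w) := by
      have : (4:ℕ) ^ w = 2 ^ (2 * w) := by
        rw [pow_mul]; norm_num
      rw [this, ← pow_add]
      congr 1
      omega
    rw [hsum_eq, this] at hlow
    exact hlow
  -- fourth power trick
  have h4 : B.card ^ 4 * 3 ^ (3 * w + 1) ≤ 2 ^ (4 * (n + w)) := by
    calc B.card ^ 4 * 3 ^ (3 * w + 1) ≤ B.card ^ 4 * 3 ^ (4 * m) := by
          exact Nat.mul_le_mul_left _ (Nat.pow_le_pow_right (by norm_num) (by omega))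
      _ = (B.card * 3 ^ m) ^ 4 := by rw [mul_pow, ← pow_mul, Nat.mul_comm m 4]
      _ ≤ (2 ^ (n + w)) ^ 4 := Nat.pow_le_pow_left hUB 4
      _ = 2 ^ (4 * (n + w)) := by rw [← pow_mul, Nat.mul_comm]
  have hnd : d + 1 ≤ n := by omega
  have hkey : 2 ^ (4 * (n + w)) ≤ 3 ^ (3 * w + 1) * (2 ^ (n - d - 1)) ^ 4 := by
    have h1 : (2 ^ (n - d - 1)) ^ 4 = 2 ^ (4 * n - 4 * d - 4) := by
      rw [← pow_mul]
      congr 1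
      omega
    rw [h1]
    calc 2 ^ (4 * (n + w)) = 2 ^ (4*w + 4*d + 4) * 2 ^ (4 * n - 4 * d - 4) := by
          rw [← pow_add]
          congr 1
          omega
      _ ≤ 3 ^ (3 * w + 1) * 2 ^ (4 * n - 4 * d - 4) :=
          Nat.mul_le_mul_right _ (keynum w d hd hwt)
  have hfin : B.card ^ 4 ≤ (2 ^ (n - d - 1)) ^ 4 := by
    have h3 : B.card ^ 4 * 3 ^ (3 * w + 1) ≤ (2 ^ (n - d - 1)) ^ 4 * 3 ^ (3 * w + 1) := by
      calc B.card ^ 4 * 3 ^ (3 * w + 1) ≤ 2 ^ (4 * (n + w)) := h4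
        _ ≤ 3 ^ (3 * w + 1) * (2 ^ (n - d - 1)) ^ 4 := hkey
        _ = (2 ^ (n - d - 1)) ^ 4 * 3 ^ (3 * w + 1) := Nat.mul_comm _ _
    exact Nat.le_of_mul_le_mul_right h3 (Nat.pow_pos (by norm_num))
  exact (Nat.pow_le_pow_iff_left (by norm_num : (4:ℕ) ≠ 0)).mp hfin

/-- Reflection bound for the d = 0 case. -/
private lemma reflect :
    2 * (Finset.univ.filter (fun y : Fin n → ZMod 2 =>
        3 * (Finset.univ.filter (fun i : Fin n => a i ≠ 0)).card <
        4 * (Finset.univ.filter (fun i : Fin n => a i * y i ≠ 0)).card)).card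
      ≤ 2 ^ n := by
  classical
  set w := (Finset.univ.filter (fun i : Fin n => a i ≠ 0)).card with hw
  set wt : (Fin n → ZMod 2) → ℕ :=
    fun y => (Finset.univ.filter (fun i : Fin n => a i * y i ≠ 0)).card with hwtdef
  set B := Finset.univ.filter (fun y : Fin n → ZMod 2 => 3 * w < 4 * wt y) with hB
  set f : (Fin n → ZMod 2) → (Fin n → ZMod 2) :=
    fun y i => if a i = 0 then y i else y i + 1 with hf
  have hwty : ∀ y, wt y ≤ w := by
    intro y
    refine Finset.card_le_card ?_
    intro i hi
    rw [Finset.mem_filter] at hi ⊢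
    refine ⟨Finset.mem_univ _, fun h0 => hi.2 (by rw [h0, zero_mul])⟩
  have hff : ∀ y, f (f y) = y := by
    intro y
    funext i
    rw [hf]
    by_cases h : a i = 0
    · simp [h]
    · simp only [h, if_false]
      have : ∀ v : ZMod 2, v + 1 + 1 = v := by decide
      exact this (y i)
  have hwtf : ∀ y, wt (f y) = w - wt y := by
    intro y
    have hseteq : Finset.univ.filter (fun i : Fin n => a i * f y i ≠ 0) =
        (Finset.univ.filter (fun i : Fin n => a i ≠ 0)) \
          (Finset.univ.filter (fun i : Fin n => a i * y i ≠ 0)) := by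
      ext i
      simp only [Finset.mem_filter, Finset.mem_sdiff, Finset.mem_univ, true_and, hf]
      by_cases h : a i = 0
      · simp [h]
      · have ha1 : a i = 1 := by rcases zmod2_cases (a i) with h' | h' <;> tauto
        simp only [h, if_false, ha1, one_mul]
        constructor
        · intro h1
          refine ⟨one_ne_zero, ?_⟩
          intro h2
          rcases zmod2_cases (y i) with hy | hy
          · rw [hy] at h2; exact h2 rfl
          · rw [hy] at h1; exact h1 (by decide)
        · rintro ⟨-, h2⟩
          rcases zmod2_cases (y i) with hy | hy
          · rw [hy]; decide
          · exact absurd (hy ▸ one_ne_zero) h2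
    rw [hwtdef]
    simp only
    rw [hseteq, Finset.card_sdiff_of_subset (by
      intro i hi
      rw [Finset.mem_filter] at hi ⊢
      exact ⟨Finset.mem_univ _, fun h0 => hi.2 (by rw [h0, zero_mul])⟩)]
  have hmap : ∀ y ∈ B, f y ∈ Finset.univ \ B := by
    intro y hy
    rw [hB, Finset.mem_filter] at hy
    rw [Finset.mem_sdiff]
    refine ⟨Finset.mem_univ _, ?_⟩
    rw [hB, Finset.mem_filter]
    rintro ⟨-, hcon⟩
    rw [hwtf y] at hcon
    have h1 := hwty y
    omega
  have hinj : Set.InjOn f ↑B := by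
    intro y1 _ y2 _ h
    have := congrArg f h
    rwa [hff, hff] at this
  have hcard := Finset.card_le_card_of_injOn f hmap hinj
  rw [Finset.card_sdiff_of_subset (Finset.subset_univ _), Finset.card_univ] at hcard
  have huniv : Fintype.card (Fin n → ZMod 2) = 2 ^ n := by
    rw [Fintype.card_fun]
    norm_num
  rw [huniv] at hcard
  have hBle : B.card ≤ 2 ^ n := by
    calc B.card ≤ Finset.univ.card := Finset.card_le_univ _
      _ = 2 ^ n := by rw [Finset.card_univ, huniv]
  omega

end Main

open MvPolynomial Finset in
open Classical in
theorem stmt16 (n s d : ℕ) (p : MvPolynomial (Fin n) (ZMod 2))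
    (hp : p ≠ 0) (hsparse : p.support.card ≤ s) (hdeg : p.totalDegree ≤ d)
    (a : Fin n → ZMod 2) (ha : MvPolynomial.eval a p = 1)
    (hwt : 24 * d ≤ (Finset.univ.filter (fun i : Fin n => a i ≠ 0)).card) :
    (1 : ℝ) / 2 ^ (d + 1) ≤
      ((Finset.univ.filter (fun y : Fin n → ZMod 2 =>
          MvPolynomial.eval (fun i => a i * y i) p = 1 ∧
            ((Finset.univ.filter (fun i : Fin n => a i * y i ≠ 0)).card : ℝ) ≤
              (3 / 4) * ((Finset.univ.filter (fun i : Fin n => a i ≠ 0)).card : ℝ))).card : ℝ)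
        / 2 ^ n := by
  classical
  set w := (Finset.univ.filter (fun i : Fin n => a i ≠ 0)).card with hw
  set wt : (Fin n → ZMod 2) → ℕ :=
    fun y => (Finset.univ.filter (fun i : Fin n => a i * y i ≠ 0)).card with hwtdef
  set q : MvPolynomial (Fin n) (ZMod 2) := bind₁ (fun i => C (a i) * X i) p with hq
  have Heval : ∀ y : Fin n → ZMod 2, eval y q = eval (fun i => a i * y i) p := by
    intro y
    have h := eval₂Hom_bind₁ (RingHom.id (ZMod 2)) y (fun i => C (a i) * X i) p
    simpa using h
  have Hqdeg : q.totalDegree ≤ d := by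
    refine le_trans ?_ hdeg
    rw [hq]
    conv_lhs => rw [as_sum p, map_sum]
    refine le_trans (totalDegree_finset_sum _ _) (Finset.sup_le ?_)
    intro v hv
    rw [bind₁_monomial]
    refine le_trans (totalDegree_mul _ _) ?_
    rw [totalDegree_C, zero_add]
    refine le_trans (totalDegree_finset_prod _ _) ?_
    have step : ∀ i ∈ v.support, ((C (a i) * X i) ^ v i).totalDegree ≤ v i := by
      intro i _
      refine le_trans (totalDegree_pow _ _) ?_
      have h1 : (C (a i) * X i).totalDegree ≤ 1 := by
        refine le_trans (totalDegree_mul _ _) ?_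
        rw [totalDegree_C, zero_add]
        exact le_of_eq (totalDegree_X i)
      calc v i * (C (a i) * X i).totalDegree ≤ v i * 1 := Nat.mul_le_mul_left _ h1
        _ = v i := Nat.mul_one _
    refine le_trans (Finset.sum_le_sum step) ?_
    exact le_totalDegree hv
  have Hqa : ∃ y, eval y q = 1 := by
    refine ⟨a, ?_⟩
    rw [Heval]
    have haa : (fun i => a i * a i) = a := by
      funext i
      rcases zmod2_cases (a i) with h | h <;> rw [h] <;> ring
    rw [haa, ha]
  set G := Finset.univ.filter (fun y : Fin n → ZMod 2 =>
    eval (fun i => a i * y i) p = 1) with hG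
  have hGcard : 2 ^ (n - d) ≤ G.card := by
    have h1 := sz_count n d q Hqdeg Hqa
    have h2 : Finset.univ.filter (fun y : Fin n → ZMod 2 => eval y q = 1) = G := by
      refine Finset.filter_congr ?_
      intro y _
      rw [Heval]
    rwa [h2] at h1
  set B := Finset.univ.filter (fun y : Fin n → ZMod 2 => 3 * w < 4 * wt y) with hB
  set T := Finset.univ.filter (fun y : Fin n → ZMod 2 =>
          MvPolynomial.eval (fun i => a i * y i) p = 1 ∧
            ((Finset.univ.filter (fun i : Fin n => a i * y i ≠ 0)).card : ℝ) ≤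
              (3 / 4) * ((Finset.univ.filter (fun i : Fin n => a i ≠ 0)).card : ℝ)) with hT
  have hwty : ∀ y, wt y ≤ w := by
    intro y
    refine Finset.card_le_card ?_
    intro i hi
    rw [Finset.mem_filter] at hi ⊢
    exact ⟨Finset.mem_univ _, fun h0 => hi.2 (by rw [h0, zero_mul])⟩
  have hsub : G \ B ⊆ T := by
    intro y hy
    rw [Finset.mem_sdiff, hG, Finset.mem_filter] at hy
    obtain ⟨⟨-, h1⟩, h2⟩ := hy
    rw [hB, Finset.mem_filter] at h2
    push_neg at h2
    have h3 : 4 * wt y ≤ 3 * w := h2 (Finset.mem_univ _)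
    rw [hT, Finset.mem_filter]
    refine ⟨Finset.mem_univ _, h1, ?_⟩
    have h5 : (Finset.univ.filter (fun i : Fin n => a i * y i ≠ 0)).card = wt y := rfl
    rw [h5]
    have h4 : ((4 * wt y : ℕ) : ℝ) ≤ ((3 * w : ℕ) : ℝ) := by exact_mod_cast h3
    push_cast at h4
    linarith
  have hTcard : 2 ^ (n - d - 1) ≤ T.card := by
    have hGB : G.card - B.card ≤ T.card :=
      le_trans (Finset.le_card_sdiff _ _) (Finset.card_le_card hsub)
    have hBbound : B.card + 2 ^ (n - d - 1) ≤ 2 ^ (n - d) := by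
      rcases Nat.eq_zero_or_pos d with hd0 | hd1
      · -- d = 0 : reflection
        subst hd0
        have h2B : 2 * B.card ≤ 2 ^ n := reflect n a
        by_cases hw0 : w = 0
        · have hBempty : B = ∅ := by
            rw [hB]
            refine Finset.filter_eq_empty_iff.mpr ?_
            intro y _
            have := hwty y
            omega
          rw [hBempty, Finset.card_empty, zero_add]
          exact Nat.pow_le_pow_right (by norm_num) (by omega)
        · have hn1 : 1 ≤ n := by
            have hwn : w ≤ n := by
              rw [hw]
              calc (Finset.univ.filter (fun i : Fin n => a i ≠ 0)).card
                  ≤ Finset.univ.card := Finset.card_filter_le _ _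
                _ = n := by simp
            omega
          have hpow : 2 ^ n = 2 ^ (n - 1) + 2 ^ (n - 1) := by
            have h := pow_succ 2 (n - 1)
            have hnn : n - 1 + 1 = n := by omega
            rw [hnn] at h
            omega
          simp only [Nat.sub_zero]
          omega
      · -- d ≥ 1 : Chernoff
        have hch : B.card ≤ 2 ^ (n - d - 1) := chernoff n a d hd1 hwt
        have hnd : d + 1 ≤ n := by
          have hwn : w ≤ n := by
            rw [hw]
            calc (Finset.univ.filter (fun i : Fin n => a i ≠ 0)).card
                ≤ Finset.univ.card := Finset.card_filter_le _ _
              _ = n := by simp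
          omega
        have hpow : 2 ^ (n - d) = 2 ^ (n - d - 1) + 2 ^ (n - d - 1) := by
          have h := pow_succ 2 (n - d - 1)
          have hnn : n - d - 1 + 1 = n - d := by omega
          rw [hnn] at h
          omega
        omega
    omega
  -- conclude with real arithmetic
  have hTn : 2 ^ n ≤ T.card * 2 ^ (d + 1) := by
    calc 2 ^ n ≤ 2 ^ ((n - d - 1) + (d + 1)) :=
        Nat.pow_le_pow_right (by norm_num) (by omega)
      _ = 2 ^ (n - d - 1) * 2 ^ (d + 1) := pow_add _ _ _
      _ ≤ T.card * 2 ^ (d + 1) := Nat.mul_le_mul_right _ hTcard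
  rw [div_le_div_iff₀ (by positivity) (by positivity), one_mul]
  exact_mod_cast hTn
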